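/- Let P₁ and P₂ be finite partially ordered sets, where the Hasse diagram of P₂ contains no collider (so that C(P₂) is simplicial), let q₁ be the number of extreme rays of C(P₁), and let q₂ = |P₂|. Then: (a) every matrix T : P₁ × P₂ → ℝ that admits an ND factorization admits one with at most min(q₁, q₂) terms; and (b) there exists a matrix T : P₁ × P₂ → ℝ admitting an ND factorization but admitting no ND factorization with fewer than min(q₁, q₂) terms. -/

import Mathlib

set_option linter.unusedSectionVars false
set_option linter.unusedVariables false
set_option maxHeartbeats 1000000

/-- The order cone of a finite poset: nonnegative, nondecreasing real-valued functions. -/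
def orderCone (P : Type*) [PartialOrder P] : Set (P → ℝ) :=
  {f | (∀ x, 0 ≤ f x) ∧ ∀ ⦃x y : P⦄, x ≤ y → f x ≤ f y}

/-- `v` spans an extreme ray of the convex cone `C`. -/
def SpansExtremeRay {E : Type*} [AddCommMonoid E] [SMul ℝ E] (C : Set E) (v : E) : Prop :=
  v ∈ C ∧ v ≠ 0 ∧ ∀ x y, x ∈ C → y ∈ C → v = x + y →
    (∃ α : ℝ, 0 ≤ α ∧ x = α • v) ∧ (∃ β : ℝ, 0 ≤ β ∧ y = β • v)

/-- `T` admits an ND factorization with `r` terms. -/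
def HasNDFact {P₁ P₂ : Type*} [PartialOrder P₁] [PartialOrder P₂]
    (T : P₁ → P₂ → ℝ) (r : ℕ) : Prop :=
  ∃ (a : Fin r → P₁ → ℝ) (b : Fin r → P₂ → ℝ),
    (∀ i, a i ∈ orderCone P₁) ∧ (∀ i, b i ∈ orderCone P₂) ∧
    ∀ x y, T x y = ∑ i, a i x * b i y

open Classical in
/-- Indicator of a set, as a real function. -/
noncomputable def ind {P : Type*} (U : Set P) : P → ℝ := fun x => if x ∈ U then 1 else 0

section basic
variable {P : Type*} [PartialOrder P]

lemma ind_mem_iff {U : Set P} {x : P} : x ∈ U ↔ ind U x = 1 := by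
  classical
  simp only [ind]
  split <;> simp_all

lemma ind_nonneg (U : Set P) (x : P) : 0 ≤ ind U x := by
  classical simp only [ind]; split <;> norm_num

lemma ind_of_mem {U : Set P} {x : P} (h : x ∈ U) : ind U x = 1 := by
  classical simp [ind, h]

lemma ind_of_not_mem {U : Set P} {x : P} (h : x ∉ U) : ind U x = 0 := by
  classical simp [ind, h]

lemma ind_inj {U V : Set P} (h : ind U = ind V) : U = V := by
  ext x
  rw [ind_mem_iff, ind_mem_iff, h]

lemma ind_mem_orderCone {U : Set P} (hU : IsUpperSet U) : ind U ∈ orderCone P := by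
  refine ⟨ind_nonneg U, fun x y hxy => ?_⟩
  by_cases hx : x ∈ U
  · rw [ind_of_mem hx, ind_of_mem (hU hxy hx)]
  · rw [ind_of_not_mem hx]; exact ind_nonneg U y

lemma zero_mem_orderCone : (0 : P → ℝ) ∈ orderCone P :=
  ⟨fun _ => le_refl 0, fun _ _ _ => le_refl 0⟩

lemma add_mem_orderCone {f g : P → ℝ} (hf : f ∈ orderCone P) (hg : g ∈ orderCone P) :
    f + g ∈ orderCone P :=
  ⟨fun x => add_nonneg (hf.1 x) (hg.1 x), fun x y h => add_le_add (hf.2 h) (hg.2 h)⟩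

lemma smul_mem_orderCone {c : ℝ} (hc : 0 ≤ c) {f : P → ℝ} (hf : f ∈ orderCone P) :
    c • f ∈ orderCone P :=
  ⟨fun x => mul_nonneg hc (hf.1 x), fun x y h => mul_le_mul_of_nonneg_left (hf.2 h) hc⟩

lemma sum_mem_orderCone {ι : Type*} (s : Finset ι) (f : ι → P → ℝ)
    (hf : ∀ i ∈ s, f i ∈ orderCone P) : (∑ i ∈ s, f i) ∈ orderCone P := by
  classical
  induction s using Finset.induction with
  | empty => simpa using zero_mem_orderCone
  | insert _ _ hx ih =>
    rw [Finset.sum_insert hx]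
    exact add_mem_orderCone (hf _ (Finset.mem_insert_self _ _))
      (ih fun i hi => hf i (Finset.mem_insert_of_mem hi))

/-- A connected nonempty upper set. -/
def ConnUp (U : Set P) : Prop :=
  U.Nonempty ∧ IsUpperSet U ∧ ∀ a ∈ U, ∀ b ∈ U,
    Relation.ReflTransGen (fun x y => x ∈ U ∧ y ∈ U ∧ (x ≤ y ∨ y ≤ x)) a b

/-- Indicator of a connected nonempty upper set spans an extreme ray of the order cone. -/
lemma connUp_spansExtremeRay {U : Set P} (hU : ConnUp U) :
    SpansExtremeRay (orderCone P) (ind U) := by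
  obtain ⟨⟨x₀, hx₀⟩, hup, hconn⟩ := hU
  refine ⟨ind_mem_orderCone hup, ?_, ?_⟩
  · intro h
    have := congrFun h x₀
    rw [ind_of_mem hx₀] at this
    norm_num at this
  · intro g h hg hh hsum
    -- g and h vanish off U
    have hoff : ∀ x ∉ U, g x = 0 ∧ h x = 0 := by
      intro x hx
      have e := congrFun hsum x
      rw [ind_of_not_mem hx] at e
      simp only [Pi.add_apply] at e
      constructor <;> nlinarith [hg.1 x, hh.1 x]
    -- g is constant on U
    have hconst : ∀ a ∈ U, ∀ b ∈ U, g a = g b := by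
      intro a ha b hb
      have key : ∀ {x y : P}, x ∈ U → y ∈ U → (x ≤ y ∨ y ≤ x) → g x = g y := by
        intro x y hx hy hxy
        have ex := congrFun hsum x
        have ey := congrFun hsum y
        rw [ind_of_mem hx] at ex
        rw [ind_of_mem hy] at ey
        simp only [Pi.add_apply] at ex ey
        rcases hxy with hle | hle
        · have := hg.2 hle; have := hh.2 hle; linarith
        · have := hg.2 hle; have := hh.2 hle; linarith
      have hr := hconn a ha b hb
      clear hb
      induction hr with
      | refl => rfl
      | tail _ hstep ih => exact ih.trans (key hstep.1 hstep.2.1 hstep.2.2)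
    set α := g x₀ with hα
    have hαnn : 0 ≤ α := hg.1 x₀
    have hgeq : g = α • ind U := by
      funext x
      by_cases hx : x ∈ U
      · rw [Pi.smul_apply, ind_of_mem hx, smul_eq_mul, mul_one]
        exact hconst x hx x₀ hx₀
      · rw [Pi.smul_apply, ind_of_not_mem hx, smul_eq_mul, mul_zero]
        exact (hoff x hx).1
    refine ⟨⟨α, hαnn, hgeq⟩, ⟨1 - α, ?_, ?_⟩⟩
    · have e := congrFun hsum x₀
      rw [ind_of_mem hx₀] at e
      have := hh.1 x₀
      simp only [Pi.add_apply] at e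
      linarith
    · funext x
      have e := congrFun hsum x
      have e2 := congrFun hgeq x
      simp only [Pi.add_apply] at e
      simp only [Pi.smul_apply, smul_eq_mul] at e2 ⊢
      linarith

end basic

section decomp
variable {P : Type*} [Fintype P] [PartialOrder P]

/-- The finite set of connected nonempty upper sets. -/
noncomputable def connUps (P : Type*) [Fintype P] [PartialOrder P] : Finset (Set P) :=
  (Set.toFinite {U : Set P | ConnUp U}).toFinset

lemma mem_connUps {U : Set P} : U ∈ connUps P ↔ ConnUp U := by
  simp [connUps]

lemma orderCone_decomp_aux (n : ℕ) : ∀ f : P → ℝ, f ∈ orderCone P →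
    (Finset.univ.filter (fun x => f x ≠ 0)).card = n →
    ∃ c : Set P → ℝ, (∀ U, 0 ≤ c U) ∧ ∀ x, f x = ∑ U ∈ connUps P, c U * ind U x := by
  classical
  induction n using Nat.strong_induction_on with
  | _ n IH =>
  intro f hf hcard
  by_cases h0 : ∀ x, f x = 0
  · refine ⟨0, fun U => le_refl 0, fun x => ?_⟩
    simp [h0 x]
  · push_neg at h0
    obtain ⟨x₀, hx₀⟩ := h0
    have hx₀pos : 0 < f x₀ := lt_of_le_of_ne (hf.1 x₀) (Ne.symm hx₀)
    set S : Set P := {x | 0 < f x} with hS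
    set r : P → P → Prop := fun a b => a ∈ S ∧ b ∈ S ∧ (a ≤ b ∨ b ≤ a) with hr
    set U : Set P := {y | y ∈ S ∧ Relation.ReflTransGen r x₀ y} with hUdef
    have hx₀U : x₀ ∈ U := ⟨hx₀pos, Relation.ReflTransGen.refl⟩
    have hupper : IsUpperSet U := by
      intro y z hyz hy
      have hzS : z ∈ S := lt_of_lt_of_le hy.1 (hf.2 hyz)
      exact ⟨hzS, hy.2.tail ⟨hy.1, hzS, Or.inl hyz⟩⟩
    -- anything in S comparable to an element of U is in U
    have habsorb : ∀ y ∈ U, ∀ z ∈ S, (y ≤ z ∨ z ≤ y) → z ∈ U := by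
      intro y hy z hz hc
      exact ⟨hz, hy.2.tail ⟨hy.1, hz, hc⟩⟩
    have hconn : ConnUp U := by
      refine ⟨⟨x₀, hx₀U⟩, hupper, ?_⟩
      have hpath : ∀ y, Relation.ReflTransGen r x₀ y → y ∈ S →
          Relation.ReflTransGen (fun a b => a ∈ U ∧ b ∈ U ∧ (a ≤ b ∨ b ≤ a)) x₀ y := by
        intro y hy hyS
        induction hy with
        | refl => exact Relation.ReflTransGen.refl
        | tail h1 step ih =>
          have hz : _ ∈ U := ⟨step.1, h1⟩
          have hy' : _ ∈ U := ⟨step.2.1, h1.tail step⟩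
          exact (ih step.1).tail ⟨hz, hy', step.2.2⟩
      have hsymm : Symmetric (fun a b => a ∈ U ∧ b ∈ U ∧ (a ≤ b ∨ b ≤ a)) := by
        intro a b h
        exact ⟨h.2.1, h.1, h.2.2.symm⟩
      intro a ha b hb
      exact Relation.ReflTransGen.trans
        (@Std.Symm.symm _ _ (@Relation.ReflTransGen.stdSymm _ _ ⟨fun x y h => hsymm h⟩) _ _ (hpath a ha.2 ha.1)) (hpath b hb.2 hb.1)
    have hUfin : U.Finite := Set.toFinite U
    have hUne : hUfin.toFinset.Nonempty := ⟨x₀, hUfin.mem_toFinset.2 hx₀U⟩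
    set m : ℝ := (hUfin.toFinset.image f).min' (hUne.image f) with hm
    obtain ⟨xm, hxmU, hxm⟩ : ∃ xm ∈ hUfin.toFinset, f xm = m := by
      have := (hUfin.toFinset.image f).min'_mem (hUne.image f)
      rw [Finset.mem_image] at this
      obtain ⟨xm, h1, h2⟩ := this
      exact ⟨xm, h1, h2⟩
    have hmin : ∀ y ∈ U, m ≤ f y := by
      intro y hy
      exact Finset.min'_le _ _ (Finset.mem_image_of_mem f (hUfin.mem_toFinset.2 hy))
    have hxmU' : xm ∈ U := hUfin.mem_toFinset.1 hxmU
    have hmpos : 0 < m := by rw [← hxm]; exact hxmU'.1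
    set g : P → ℝ := fun x => f x - m * ind U x with hg
    have hgmem : g ∈ orderCone P := by
      constructor
      · intro x
        by_cases hx : x ∈ U
        · simp only [hg, ind_of_mem hx, mul_one]
          linarith [hmin x hx]
        · simp only [hg, ind_of_not_mem hx, mul_zero]
          linarith [hf.1 x]
      · intro x y hxy
        by_cases hx : x ∈ U
        · have hyU := hupper hxy hx
          simp only [hg, ind_of_mem hx, ind_of_mem hyU, mul_one]
          linarith [hf.2 hxy]
        · by_cases hy : y ∈ U
          · have hxS : x ∉ S := by
              intro hxS
              exact hx (habsorb y hy x hxS (Or.inr hxy))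
            have hfx : f x = 0 := by
              by_contra hne
              exact hxS (lt_of_le_of_ne (hf.1 x) (Ne.symm hne))
            simp only [hg, ind_of_mem hy, ind_of_not_mem hx, mul_one, mul_zero]
            linarith [hmin y hy]
          · simp only [hg, ind_of_not_mem hx, ind_of_not_mem hy, mul_zero]
            linarith [hf.2 hxy]
    have hsub : (Finset.univ.filter (fun x => g x ≠ 0)) ⊂ (Finset.univ.filter (fun x => f x ≠ 0)) := by
      constructor
      · intro x hx
        rw [Finset.mem_filter] at hx ⊢
        refine ⟨Finset.mem_univ x, ?_⟩
        intro hfx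
        have hxS : x ∉ S := by simp [hS, hfx]
        have hxU : x ∉ U := fun h => hxS h.1
        apply hx.2
        simp [hg, ind_of_not_mem hxU, hfx]
      · intro hsup
        have h1 : xm ∈ Finset.univ.filter (fun x => f x ≠ 0) := by
          rw [Finset.mem_filter]
          exact ⟨Finset.mem_univ xm, by rw [hxm]; exact ne_of_gt hmpos⟩
        have h2 := hsup h1
        rw [Finset.mem_filter] at h2
        apply h2.2
        simp [hg, ind_of_mem hxmU', hxm]
    have hlt : (Finset.univ.filter (fun x => g x ≠ 0)).card < n := by
      rw [← hcard]; exact Finset.card_lt_card hsub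
    obtain ⟨c', hc'0, hc'⟩ := IH _ hlt g hgmem rfl
    refine ⟨fun V => c' V + if V = U then m else 0, ?_, ?_⟩
    · intro V
      have := hc'0 V
      dsimp only
      split <;> linarith
    · intro x
      have hfx : f x = g x + m * ind U x := by simp [hg]
      rw [hfx, hc' x]
      rw [show (∑ V ∈ connUps P, (c' V + if V = U then m else 0) * ind V x)
          = (∑ V ∈ connUps P, c' V * ind V x)
            + ∑ V ∈ connUps P, (if V = U then m else 0) * ind V x by
        rw [← Finset.sum_add_distrib]; apply Finset.sum_congr rfl; intros; ring]
      congr 1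
      rw [Finset.sum_eq_single U]
      · simp
      · intro V hV hne; simp [hne]
      · intro hU
        exact absurd (mem_connUps.2 hconn) hU

lemma orderCone_decomp {f : P → ℝ} (hf : f ∈ orderCone P) :
    ∃ c : Set P → ℝ, (∀ U, 0 ≤ c U) ∧ ∀ x, f x = ∑ U ∈ connUps P, c U * ind U x :=
  orderCone_decomp_aux _ f hf rfl

end decomp

section nocollider
variable {P : Type*} [Fintype P] [PartialOrder P]

lemma down_chain (hnc : ¬ ∃ a b c : P, a ≠ b ∧ a ⋖ c ∧ b ⋖ c) (x : P) :
    ∀ y z : P, y ≤ x → z ≤ x → (y ≤ z ∨ z ≤ y) := by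
  induction x using WellFoundedLT.induction with
  | _ x IH =>
  intro y z hy hz
  rcases eq_or_lt_of_le hy with rfl | hy'
  · exact Or.inr hz
  rcases eq_or_lt_of_le hz with rfl | hz'
  · exact Or.inl hy
  obtain ⟨w, hyw, hwx⟩ := hy'.exists_le_covby
  obtain ⟨w', hzw', hw'x⟩ := hz'.exists_le_covby
  have hww : w = w' := by
    by_contra hne
    exact hnc ⟨w, w', x, hne, hwx, hw'x⟩
  exact IH w hwx.lt y z hyw (hww ▸ hzw')

lemma connUp_principal (hnc : ¬ ∃ a b c : P, a ≠ b ∧ a ⋖ c ∧ b ⋖ c)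
    {U : Set P} (hU : ConnUp U) : ∃ y, U = Set.Ici y := by
  obtain ⟨hne, hup, hconn⟩ := hU
  have hlb : ∀ a ∈ U, ∀ b ∈ U, ∃ p ∈ U, p ≤ a ∧ p ≤ b := by
    intro a ha b hb
    have hr := hconn a ha b hb
    clear hb
    induction hr with
    | refl => exact ⟨a, ha, le_refl a, le_refl a⟩
    | @tail b' c h1 step ih =>
      obtain ⟨p, hpU, hpa, hpb'⟩ := ih
      rcases step.2.2 with hbc | hcb
      · exact ⟨p, hpU, hpa, hpb'.trans hbc⟩
      · rcases down_chain hnc b' p c hpb' hcb with hpc | hcp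
        · exact ⟨p, hpU, hpa, hpc⟩
        · exact ⟨c, step.2.1, hcp.trans hpa, le_refl c⟩
  classical
  have hfin : U.Finite := Set.toFinite U
  obtain ⟨m, hmU, hmmin⟩ := Finset.exists_minimal (s := hfin.toFinset)
    (by obtain ⟨x, hx⟩ := hne; exact ⟨x, hfin.mem_toFinset.2 hx⟩)
  have hmU' : m ∈ U := hfin.mem_toFinset.1 hmU
  refine ⟨m, Set.ext fun z => ⟨fun hz => ?_, fun hz => hup hz hmU'⟩⟩
  obtain ⟨p, hpU, hpm, hpz⟩ := hlb m hmU' z hz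
  have : p = m := by
    by_contra hne
    exact (lt_of_le_of_ne hpm hne).not_ge (hmmin (hfin.mem_toFinset.2 hpU) hpm)
  rw [← this]
  exact hpz

lemma principal_connUp (y : P) : ConnUp (Set.Ici y) := by
  refine ⟨⟨y, le_refl y⟩, isUpperSet_Ici y, fun a ha b hb => ?_⟩
  exact Relation.ReflTransGen.tail
    (Relation.ReflTransGen.single ⟨ha, le_refl y, Or.inr ha⟩) ⟨le_refl y, hb, Or.inl hb⟩

open Classical in
lemma connUps_eq_image (hnc : ¬ ∃ a b c : P, a ≠ b ∧ a ⋖ c ∧ b ⋖ c) :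
    connUps P = Finset.univ.image (fun y : P => Set.Ici y) := by
  classical
  ext U
  simp only [mem_connUps, Finset.mem_image, Finset.mem_univ, true_and]
  constructor
  · intro h
    obtain ⟨y, hy⟩ := connUp_principal hnc h
    exact ⟨y, hy.symm⟩
  · rintro ⟨y, rfl⟩
    exact principal_connUp y

open Classical in
/-- Decomposition over principal filters for no-collider posets. -/
lemma orderCone_decomp_nocollider (hnc : ¬ ∃ a b c : P, a ≠ b ∧ a ⋖ c ∧ b ⋖ c)
    {f : P → ℝ} (hf : f ∈ orderCone P) :
    ∃ μ : P → ℝ, (∀ y, 0 ≤ μ y) ∧ ∀ x, f x = ∑ y, μ y * ind (Set.Ici y) x := by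
  obtain ⟨c, hc0, hc⟩ := orderCone_decomp hf
  classical
  refine ⟨fun y => c (Set.Ici y), fun y => hc0 _, fun x => ?_⟩
  rw [hc x, connUps_eq_image hnc,
    Finset.sum_image (fun a _ b _ hab => Set.Ici_injective hab)]

/-- Linear independence of principal-filter indicators (any finite poset). -/
lemma ici_indep {d : P → ℝ} (h : ∀ x, ∑ y, d y * ind (Set.Ici y) x = 0) :
    ∀ y, d y = 0 := by
  classical
  by_contra hcon
  push_neg at hcon
  obtain ⟨y, hy⟩ := hcon
  obtain ⟨y₀, hy₀mem, hy₀min⟩ := Finset.exists_minimal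
    (s := Finset.univ.filter (fun y => d y ≠ 0)) ⟨y, by simp [hy]⟩
  simp only [Finset.mem_filter] at hy₀mem
  have := h y₀
  rw [Finset.sum_eq_single y₀] at this
  · rw [ind_of_mem (Set.mem_Ici.2 (le_refl y₀)), mul_one] at this
    exact hy₀mem.2 this
  · intro y hymem hne
    by_cases hle : y ≤ y₀
    · have hlt : y < y₀ := lt_of_le_of_ne hle hne
      have : d y = 0 := by
        by_contra hdy
        exact hlt.not_ge (hy₀min (by simp [hdy]) hlt.le)
      simp [this]
    · rw [ind_of_not_mem (by simpa [Set.mem_Ici] using hle), mul_zero]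
  · intro hmem
    exact absurd (Finset.mem_univ y₀) hmem

end nocollider

section rays
variable {P : Type*} [PartialOrder P]

def rayOf {P : Type*} [PartialOrder P] (v : P → ℝ) : Set (P → ℝ) :=
  {x | ∃ α : ℝ, 0 ≤ α ∧ x = α • v}

lemma rayOf_smul {γ : ℝ} (hγ : 0 < γ) (v : P → ℝ) : rayOf (γ • v) = rayOf v := by
  ext x
  constructor
  · rintro ⟨α, hα, rfl⟩
    exact ⟨α * γ, by positivity, by rw [smul_smul]⟩
  · rintro ⟨β, hβ, rfl⟩
    refine ⟨β / γ, by positivity, ?_⟩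
    rw [smul_smul, div_mul_cancel₀ _ (ne_of_gt hγ)]

/-- Sums of nonneg functions equalling an extreme vector split into multiples. -/
lemma extreme_finsum_split {v : P → ℝ} (hv : SpansExtremeRay (orderCone P) v)
    {ι : Type*} (s : Finset ι) :
    ∀ x : ι → P → ℝ, (∀ i ∈ s, x i ∈ orderCone P) → v = ∑ i ∈ s, x i →
      ∀ i ∈ s, ∃ α : ℝ, 0 ≤ α ∧ x i = α • v := by
  classical
  induction s using Finset.induction with
  | empty =>
    intro x hx hsum i hi
    simp at hi
  | @insert a s ha ih =>
    intro x hx hsum i hi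
    rw [Finset.sum_insert ha] at hsum
    obtain ⟨⟨α, hα, hxa⟩, ⟨β, hβ, hxs⟩⟩ := hv.2.2 (x a) (∑ j ∈ s, x j)
      (hx a (Finset.mem_insert_self a s))
      (sum_mem_orderCone s x fun j hj => hx j (Finset.mem_insert_of_mem hj)) hsum
    rcases Finset.mem_insert.1 hi with rfl | hi'
    · exact ⟨α, hα, hxa⟩
    rcases eq_or_lt_of_le hβ with hβ0 | hβpos
    · -- sum over s is zero, all terms nonneg functions, so x i = 0
      have hzero : ∑ j ∈ s, x j = 0 := by rw [hxs, ← hβ0, zero_smul]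
      refine ⟨0, le_refl 0, ?_⟩
      rw [zero_smul]
      funext t
      have hsum0 : ∑ j ∈ s, x j t = 0 := by
        have := congrFun hzero t
        rw [Finset.sum_apply] at this
        exact this
      have := (Finset.sum_eq_zero_iff_of_nonneg
        (fun j hj => (hx j (Finset.mem_insert_of_mem hj)).1 t)).1 hsum0
      exact this i hi'
    · have hv' : v = ∑ j ∈ s, β⁻¹ • x j := by
        rw [← Finset.smul_sum, hxs, smul_smul, inv_mul_cancel₀ (ne_of_gt hβpos), one_smul]
      obtain ⟨α', hα', hxi⟩ := ih (fun j => β⁻¹ • x j)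
        (fun j hj => smul_mem_orderCone (by positivity) (hx j (Finset.mem_insert_of_mem hj)))
        hv' i hi'
      refine ⟨β * α', by positivity, ?_⟩
      have : x i = β • (β⁻¹ • x i) := by
        rw [smul_smul, mul_inv_cancel₀ (ne_of_gt hβpos), one_smul]
      rw [this, hxi, smul_smul]

end rays

section counting
variable (P : Type*) [Fintype P] [PartialOrder P]

lemma card_rays :
    Nat.card {R : Set (P → ℝ) // ∃ v : P → ℝ,
      SpansExtremeRay (orderCone P) v ∧ R = {x | ∃ α : ℝ, 0 ≤ α ∧ x = α • v}}
      = (connUps P).card := by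
  classical
  have hbij : Function.Bijective (fun (U : {U : Set P // U ∈ connUps P}) =>
      (⟨rayOf (ind U.1), ind U.1, connUp_spansExtremeRay (mem_connUps.1 U.2), rfl⟩ :
        {R : Set (P → ℝ) // ∃ v : P → ℝ,
          SpansExtremeRay (orderCone P) v ∧ R = {x | ∃ α : ℝ, 0 ≤ α ∧ x = α • v}})) := by
    constructor
    · rintro ⟨U, hU⟩ ⟨V, hV⟩ h
      simp only [Subtype.mk.injEq] at h
      have hUmem : ind U ∈ rayOf (ind V) := by
        rw [← h]
        exact ⟨1, zero_le_one, (one_smul ℝ _).symm⟩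
      obtain ⟨α, hα, hind⟩ := hUmem
      obtain ⟨x, hx⟩ := (mem_connUps.1 hU).1
      have h1 : (1 : ℝ) = α * ind V x := by
        have := congrFun hind x
        rw [ind_of_mem hx] at this
        simpa using this
      have hxV : x ∈ V := by
        by_contra hxV
        rw [ind_of_not_mem hxV, mul_zero] at h1
        norm_num at h1
      rw [ind_of_mem hxV, mul_one] at h1
      rw [← h1, one_smul] at hind
      have : U = V := by
        ext z
        rw [ind_mem_iff, ind_mem_iff, hind]
      exact Subtype.ext this
    · rintro ⟨R, v, hv, rfl⟩
      obtain ⟨c, hc0, hc⟩ := orderCone_decomp hv.1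
      have hvsum : v = ∑ U ∈ connUps P, c U • ind U := by
        funext x
        rw [Finset.sum_apply, hc x]
        simp [smul_eq_mul]
      have hsplit := extreme_finsum_split hv (connUps P) (fun U => c U • ind U)
        (fun U hU => smul_mem_orderCone (hc0 U)
          (connUp_spansExtremeRay (mem_connUps.1 hU)).1) hvsum
      have hex : ∃ U ∈ connUps P, c U • ind U ≠ 0 := by
        by_contra hall
        push_neg at hall
        apply hv.2.1
        rw [hvsum]
        exact Finset.sum_eq_zero hall
      obtain ⟨U, hUmem, hUne⟩ := hex
      obtain ⟨α, hα, hαeq⟩ := hsplit U hUmem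
      have hαeq' : c U • ind U = α • v := hαeq
      have hαpos : 0 < α := by
        rcases eq_or_lt_of_le hα with h0 | h
        · exfalso; apply hUne; rw [hαeq', ← h0, zero_smul]
        · exact h
      have hcUpos : 0 < c U := by
        rcases eq_or_lt_of_le (hc0 U) with h0 | h
        · exfalso; apply hUne; rw [← h0, zero_smul]
        · exact h
      have hindU : ind U = (α / c U) • v := by
        have : (c U)⁻¹ • (c U • ind U) = (c U)⁻¹ • (α • v) := by rw [hαeq']
        rw [smul_smul, smul_smul, inv_mul_cancel₀ (ne_of_gt hcUpos), one_smul] at this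
        rw [this]
        congr 1
        field_simp
      refine ⟨⟨U, hUmem⟩, ?_⟩
      apply Subtype.ext
      show rayOf (ind U) = _
      rw [hindU, rayOf_smul (by positivity) v]
      rfl
  rw [← Nat.card_eq_of_bijective _ hbij, Nat.card_eq_fintype_card, Fintype.card_coe]

end counting

section padding
variable {P₁ P₂ : Type*} [PartialOrder P₁] [PartialOrder P₂]

lemma hasNDFact_of_finset {ι : Type*} (T : P₁ → P₂ → ℝ) (s : Finset ι)
    (A : ι → P₁ → ℝ) (B : ι → P₂ → ℝ)
    (hA : ∀ i ∈ s, A i ∈ orderCone P₁) (hB : ∀ i ∈ s, B i ∈ orderCone P₂)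
    (hT : ∀ x y, T x y = ∑ i ∈ s, A i x * B i y) {r : ℕ} (hr : s.card ≤ r) :
    HasNDFact T r := by
  classical
  set e := s.equivFin with he
  refine ⟨fun i => if h : (i : ℕ) < s.card then A (e.symm ⟨i, h⟩) else 0,
          fun i => if h : (i : ℕ) < s.card then B (e.symm ⟨i, h⟩) else 0, ?_, ?_, ?_⟩
  · intro i
    dsimp only
    split
    · exact hA _ (e.symm _).2
    · exact zero_mem_orderCone
  · intro i
    dsimp only
    split
    · exact hB _ (e.symm _).2
    · exact zero_mem_orderCone
  · intro x y
    set F : ℕ → ℝ := fun j =>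
      if h : j < s.card then A (e.symm ⟨j, h⟩).1 x * B (e.symm ⟨j, h⟩).1 y else 0 with hF
    have step1 : ∀ i : Fin r,
        (if h : (i : ℕ) < s.card then A ((e.symm ⟨i, h⟩) : ι) else (0 : P₁ → ℝ)) x *
        (if h : (i : ℕ) < s.card then B ((e.symm ⟨i, h⟩) : ι) else (0 : P₂ → ℝ)) y = F i := by
      intro i
      by_cases h : (i : ℕ) < s.card
      · rw [dif_pos h, dif_pos h, hF]
        dsimp only
        rw [dif_pos h]
      · rw [dif_neg h, dif_neg h, hF]
        dsimp only
        rw [dif_neg h]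
        simp
    calc T x y = ∑ i ∈ s, A i x * B i y := hT x y
      _ = ∑ u : {z // z ∈ s}, A u.1 x * B u.1 y := (Finset.sum_coe_sort s _).symm
      _ = ∑ j : Fin s.card, A (e.symm j).1 x * B (e.symm j).1 y :=
          (Equiv.sum_comp e.symm (fun u => A u.1 x * B u.1 y)).symm
      _ = ∑ j : Fin s.card, F j := by
          apply Finset.sum_congr rfl
          intro j _
          rw [hF]
          dsimp only
          rw [dif_pos j.2]
      _ = ∑ j ∈ Finset.range s.card, F j := Fin.sum_univ_eq_sum_range F s.card
      _ = ∑ j ∈ Finset.range r, F j := by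
          apply Finset.sum_subset
          · exact Finset.range_subset_range.2 hr
          · intro j _ hj
            rw [Finset.mem_range] at hj
            rw [hF]
            dsimp only
            rw [dif_neg hj]
      _ = ∑ i : Fin r, F i := (Fin.sum_univ_eq_sum_range F r).symm
      _ = ∑ i : Fin r, _ := by
          apply Finset.sum_congr rfl
          intro i _
          dsimp only
          exact (step1 i).symm

end padding

/-- Sum swapping helper. -/
lemma swap_sum {ι κ : Type*} (s : Finset ι) (t : Finset κ)
    (f : ι → ℝ) (g : ι → κ → ℝ) (h : κ → ℝ) :
    ∑ i ∈ s, f i * (∑ z ∈ t, g i z * h z) = ∑ z ∈ t, (∑ i ∈ s, f i * g i z) * h z := by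
  calc ∑ i ∈ s, f i * (∑ z ∈ t, g i z * h z)
      = ∑ i ∈ s, ∑ z ∈ t, f i * (g i z * h z) := by
        apply Finset.sum_congr rfl
        intro i _
        rw [Finset.mul_sum]
    _ = ∑ z ∈ t, ∑ i ∈ s, f i * (g i z * h z) := Finset.sum_comm
    _ = ∑ z ∈ t, (∑ i ∈ s, f i * g i z) * h z := by
        apply Finset.sum_congr rfl
        intro z _
        rw [Finset.sum_mul]
        apply Finset.sum_congr rfl
        intro i _
        ring

theorem max_NDrank_simplicial
    (P₁ P₂ : Type*) [Fintype P₁] [Fintype P₂] [PartialOrder P₁] [PartialOrder P₂]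
    (hnc₂ : ¬ ∃ a b c : P₂, a ≠ b ∧ a ⋖ c ∧ b ⋖ c)
    (q₁ q₂ : ℕ)
    (hq₁ : Nat.card {R : Set (P₁ → ℝ) // ∃ v : P₁ → ℝ,
      SpansExtremeRay (orderCone P₁) v ∧ R = {x | ∃ α : ℝ, 0 ≤ α ∧ x = α • v}} = q₁)
    (hq₂ : Fintype.card P₂ = q₂) :
    (∀ T : P₁ → P₂ → ℝ, (∃ m, HasNDFact T m) → HasNDFact T (min q₁ q₂)) ∧
    (∃ T : P₁ → P₂ → ℝ, (∃ m, HasNDFact T m) ∧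
      ∀ r : ℕ, HasNDFact T r → min q₁ q₂ ≤ r) := by
  classical
  rw [card_rays P₁] at hq₁
  constructor
  · -- part (a)
    rintro T ⟨m, a, b, ha, hb, hT⟩
    rcases le_total q₁ q₂ with hle | hle
    · -- use the q₁ bound
      rw [min_eq_left hle]
      choose c hc0 hc using fun i => orderCone_decomp (ha i)
      apply hasNDFact_of_finset T (connUps P₁) (fun U => ind U)
        (fun U => fun y => ∑ i, c i U * b i y)
      · intro U hU
        exact ind_mem_orderCone (mem_connUps.1 hU).2.1
      · intro U _
        constructor
        · intro y
          exact Finset.sum_nonneg fun i _ => mul_nonneg (hc0 i U) ((hb i).1 y)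
        · intro y y' hyy'
          exact Finset.sum_le_sum fun i _ =>
            mul_le_mul_of_nonneg_left ((hb i).2 hyy') (hc0 i U)
      · intro x y
        rw [hT x y]
        calc ∑ i, a i x * b i y
            = ∑ i, b i y * (∑ U ∈ connUps P₁, c i U * ind U x) := by
              apply Finset.sum_congr rfl
              intro i _
              rw [← hc i x]
              ring
          _ = ∑ U ∈ connUps P₁, (∑ i, b i y * c i U) * ind U x :=
              swap_sum Finset.univ (connUps P₁) _ _ _
          _ = ∑ U ∈ connUps P₁, ind U x * ∑ i, c i U * b i y := by
              apply Finset.sum_congr rfl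
              intro U _
              rw [Finset.mul_sum, Finset.sum_mul]
              apply Finset.sum_congr rfl
              intro i _
              ring
      · rw [hq₁]
    · -- use the q₂ bound
      rw [min_eq_right hle]
      choose μ hμ0 hμ using fun i => orderCone_decomp_nocollider hnc₂ (hb i)
      apply hasNDFact_of_finset T (Finset.univ : Finset P₂)
        (fun z => fun x => ∑ i, μ i z * a i x) (fun z => ind (Set.Ici z))
      · intro z _
        constructor
        · intro x
          exact Finset.sum_nonneg fun i _ => mul_nonneg (hμ0 i z) ((ha i).1 x)
        · intro x x' hxx'
          exact Finset.sum_le_sum fun i _ =>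
            mul_le_mul_of_nonneg_left ((ha i).2 hxx') (hμ0 i z)
      · intro z _
        exact ind_mem_orderCone (isUpperSet_Ici z)
      · intro x y
        rw [hT x y]
        calc ∑ i, a i x * b i y
            = ∑ i, a i x * (∑ z, μ i z * ind (Set.Ici z) y) := by
              apply Finset.sum_congr rfl
              intro i _
              rw [← hμ i y]
          _ = ∑ z, (∑ i, a i x * μ i z) * ind (Set.Ici z) y :=
              swap_sum Finset.univ Finset.univ _ _ _
          _ = ∑ z, (∑ i, μ i z * a i x) * ind (Set.Ici z) y := by
              apply Finset.sum_congr rfl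
              intro z _
              congr 1
              apply Finset.sum_congr rfl
              intro i _
              ring
      · rw [Finset.card_univ, hq₂]
  · -- part (b)
    set k := min q₁ q₂ with hk
    have h1 : k ≤ (connUps P₁).card := hq₁ ▸ min_le_left _ _
    have h2 : k ≤ Fintype.card P₂ := hq₂ ▸ min_le_right _ _
    set E1 : Fin k → {U : Set P₁ // U ∈ connUps P₁} :=
      fun j => (connUps P₁).equivFin.symm (Fin.castLE h1 j) with hE1
    set e₁ : Fin k → Set P₁ := fun j => (E1 j).1 with he₁
    have he₁inj : Function.Injective e₁ := by
      intro j j' h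
      have : E1 j = E1 j' := Subtype.ext h
      have := (connUps P₁).equivFin.symm.injective this
      exact Fin.castLE_injective h1 this
    have he₁mem : ∀ j, ConnUp (e₁ j) := fun j => mem_connUps.1 (E1 j).2
    set e₂ : Fin k → P₂ := fun j => (Fintype.equivFin P₂).symm (Fin.castLE h2 j) with he₂
    have he₂inj : Function.Injective e₂ := by
      intro j j' h
      have := (Fintype.equivFin P₂).symm.injective h
      exact Fin.castLE_injective h2 this
    refine ⟨fun x y => ∑ j : Fin k, ind (e₁ j) x * ind (Set.Ici (e₂ j)) y, ⟨k, ?_⟩, ?_⟩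
    · exact ⟨fun j => ind (e₁ j), fun j => ind (Set.Ici (e₂ j)),
        fun j => ind_mem_orderCone (he₁mem j).2.1,
        fun j => ind_mem_orderCone (isUpperSet_Ici _), fun x y => rfl⟩
    · rintro r ⟨a, b, ha, hb, hT⟩
      choose μ hμ0 hμ using fun i => orderCone_decomp_nocollider hnc₂ (hb i)
      -- coefficient comparison
      have key : ∀ (j : Fin k) (x : P₁), ∑ i, μ i (e₂ j) * a i x = ind (e₁ j) x := by
        intro j x
        set d : P₂ → ℝ := fun z => (∑ i, a i x * μ i z)
          - ∑ j' : Fin k, (if z = e₂ j' then ind (e₁ j') x else 0) with hd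
        have hdzero : ∀ y, ∑ z, d z * ind (Set.Ici z) y = 0 := by
          intro y
          have lhs1 : ∑ z, (∑ i, a i x * μ i z) * ind (Set.Ici z) y
              = ∑ i, a i x * b i y := by
            rw [← swap_sum Finset.univ Finset.univ (fun i => a i x)
              (fun i z => μ i z) (fun z => ind (Set.Ici z) y)]
            apply Finset.sum_congr rfl
            intro i _
            rw [← hμ i y]
          have lhs2 : ∑ z, (∑ j' : Fin k, (if z = e₂ j' then ind (e₁ j') x else 0))
              * ind (Set.Ici z) y
              = ∑ j' : Fin k, ind (e₁ j') x * ind (Set.Ici (e₂ j')) y := by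
            calc ∑ z, (∑ j' : Fin k, (if z = e₂ j' then ind (e₁ j') x else 0))
                  * ind (Set.Ici z) y
                = ∑ z, ∑ j' : Fin k,
                    (if z = e₂ j' then ind (e₁ j') x * ind (Set.Ici z) y else 0) := by
                  apply Finset.sum_congr rfl
                  intro z _
                  rw [Finset.sum_mul]
                  apply Finset.sum_congr rfl
                  intro j' _
                  rw [ite_mul, zero_mul]
              _ = ∑ j' : Fin k, ∑ z,
                    (if z = e₂ j' then ind (e₁ j') x * ind (Set.Ici z) y else 0) :=
                  Finset.sum_comm
              _ = ∑ j' : Fin k, ind (e₁ j') x * ind (Set.Ici (e₂ j')) y := by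
                  apply Finset.sum_congr rfl
                  intro j' _
                  rw [Finset.sum_ite_eq' Finset.univ (e₂ j')
                    (fun z => ind (e₁ j') x * ind (Set.Ici z) y)]
                  simp
          have hsub : ∑ z, d z * ind (Set.Ici z) y
              = (∑ z, (∑ i, a i x * μ i z) * ind (Set.Ici z) y)
                - ∑ z, (∑ j' : Fin k, (if z = e₂ j' then ind (e₁ j') x else 0))
                  * ind (Set.Ici z) y := by
            rw [← Finset.sum_sub_distrib]
            apply Finset.sum_congr rfl
            intro z _
            rw [hd]
            dsimp only
            ring
          rw [hsub, lhs1, lhs2, sub_eq_zero]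
          exact (hT x y).symm
        have hdz : d (e₂ j) = 0 := ici_indep hdzero (e₂ j)
        have hsum2 : ∑ j' : Fin k, (if e₂ j = e₂ j' then ind (e₁ j') x else 0)
            = ind (e₁ j) x := by
          rw [Finset.sum_eq_single j]
          · simp
          · intro j' _ hne
            rw [if_neg (fun h => hne (he₂inj h.symm))]
          · intro h
            exact absurd (Finset.mem_univ j) h
        rw [hd] at hdz
        dsimp only at hdz
        rw [hsum2] at hdz
        have hcomm : ∑ i, μ i (e₂ j) * a i x = ∑ i, a i x * μ i (e₂ j) := by
          apply Finset.sum_congr rfl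
          intro i _
          ring
        rw [hcomm]
        linarith
      -- from key, each extreme indicator is a positive multiple of some a i
      have hfun : ∀ j : Fin k, ind (e₁ j) = ∑ i, (μ i (e₂ j) • a i) := by
        intro j
        funext x
        rw [Finset.sum_apply, ← key j x]
        apply Finset.sum_congr rfl
        intro i _
        simp [smul_eq_mul]
      have hexists : ∀ j : Fin k, ∃ i : Fin r, ∃ γ : ℝ, 0 < γ ∧ a i = γ • ind (e₁ j) := by
        intro j
        obtain ⟨w, hw⟩ := (he₁mem j).1
        have hsplit := extreme_finsum_split (connUp_spansExtremeRay (he₁mem j))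
          Finset.univ (fun i => μ i (e₂ j) • a i)
          (fun i _ => smul_mem_orderCone (hμ0 i (e₂ j)) (ha i)) (hfun j)
        choose α hα0 hαeq using fun i => hsplit i (Finset.mem_univ i)
        have hone : (1 : ℝ) = ∑ i, α i := by
          have := congrFun (hfun j) w
          rw [ind_of_mem hw, Finset.sum_apply] at this
          rw [this]
          apply Finset.sum_congr rfl
          intro i _
          have := congrFun (hαeq i) w
          simp only [Pi.smul_apply, smul_eq_mul, ind_of_mem hw, mul_one] at this
          simpa using this
        have hα : ∃ i, α i ≠ 0 := by
          by_contra hall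
          push_neg at hall
          rw [Finset.sum_eq_zero (fun i _ => hall i)] at hone
          norm_num at hone
        obtain ⟨i, hi⟩ := hα
        have hαpos : 0 < α i := lt_of_le_of_ne (hα0 i) (Ne.symm hi)
        have hμpos : 0 < μ i (e₂ j) := by
          rcases eq_or_lt_of_le (hμ0 i (e₂ j)) with h0 | h
          · exfalso
            have := congrFun (hαeq i) w
            simp only [Pi.smul_apply, smul_eq_mul, ind_of_mem hw, mul_one, ← h0,
              zero_mul] at this
            linarith
          · exact h
        refine ⟨i, α i / μ i (e₂ j), by positivity, ?_⟩
        have hαeq' : μ i (e₂ j) • a i = α i • ind (e₁ j) := hαeq i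
        have step : (μ i (e₂ j))⁻¹ • (μ i (e₂ j) • a i) = (μ i (e₂ j))⁻¹ • (α i • ind (e₁ j)) := by
          rw [hαeq']
        rw [smul_smul, smul_smul, inv_mul_cancel₀ (ne_of_gt hμpos), one_smul] at step
        rw [step]
        congr 1
        field_simp
      choose φ γ hγpos hγeq using hexists
      have hφinj : Function.Injective φ := by
        intro j j' h
        have hind : γ j • ind (e₁ j) = γ j' • ind (e₁ j') := by
          rw [← hγeq j, ← hγeq j', h]
        have hsame : e₁ j = e₁ j' := by
          have hpt : ∀ z, γ j * ind (e₁ j) z = γ j' * ind (e₁ j') z := by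
            intro z
            have := congrFun hind z
            simpa using this
          ext z
          constructor
          · intro hz
            have := hpt z
            rw [ind_of_mem hz, mul_one] at this
            by_contra hz'
            rw [ind_of_not_mem hz', mul_zero] at this
            linarith [hγpos j]
          · intro hz
            have := hpt z
            rw [ind_of_mem hz, mul_one] at this
            by_contra hz'
            rw [ind_of_not_mem hz', mul_zero] at this
            linarith [hγpos j']
        exact he₁inj hsame
      have := Fintype.card_le_of_injective φ hφinj
      simpa using this
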